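/- For every β ∈ ℝ: ∫_0^1 u(x,y,β) dx = 1 for all y ∈ [0,1], and ∫_0^1 u(x,y,β) dy = 1 for all x ∈ [0,1]. -/

import Mathlib

open Filter Finset MeasureTheory

/-- Number of inversions of a permutation of `Fin n`. -/
def inversions (n : ℕ) (π : Equiv.Perm (Fin n)) : ℕ :=
  (Finset.univ.filter (fun p : Fin n × Fin n => p.1 < p.2 ∧ π p.2 < π p.1)).card

/-- The `(n,q)`-Mallows probability mass function on `S_n`. -/
noncomputable def mallowsPMF (n : ℕ) (q : ℝ) (π : Equiv.Perm (Fin n)) : ℝ :=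
  q ^ inversions n π / ∑ σ : Equiv.Perm (Fin n), q ^ inversions n σ

open Classical in
/-- The `(n,q)`-Mallows probability of an event `P` of permutations. -/
noncomputable def mallowsProb (n : ℕ) (q : ℝ) (P : Equiv.Perm (Fin n) → Prop) : ℝ :=
  ∑ π : Equiv.Perm (Fin n), if P π then mallowsPMF n q π else 0

/-- Expectation with respect to the `(n,q)`-Mallows measure. -/
noncomputable def mallowsExp (n : ℕ) (q : ℝ) (f : Equiv.Perm (Fin n) → ℝ) : ℝ :=
  ∑ π : Equiv.Perm (Fin n), mallowsPMF n q π * f π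

/-- Action of a permutation of `Fin n` on one-based indices `{1,…,n}`. -/
def permAct (n : ℕ) (π : Equiv.Perm (Fin n)) (i : ℕ) : ℕ :=
  if h : 1 ≤ i ∧ i ≤ n then ((π ⟨i - 1, by omega⟩ : Fin n) : ℕ) + 1 else i

/-- The limiting density `u(x,y,β)` from Starr's theorem. -/
noncomputable def mallowsU (x y β : ℝ) : ℝ :=
  if β = 0 then 1
  else (β / 2) * Real.sinh (β / 2) /
    (Real.exp (β / 4) * Real.cosh (β * (x - y) / 2)
      - Real.exp (-β / 4) * Real.cosh (β * (x + y - 1) / 2)) ^ 2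



lemma denom_factor (x y β : ℝ) :
    Real.exp (β / 4) * Real.cosh (β * (x - y) / 2)
      - Real.exp (-β / 4) * Real.cosh (β * (x + y - 1) / 2)
    = Real.sinh (β * (1 - y) / 2) * Real.exp (β * (2 * x - 1) / 4)
      + Real.sinh (β * y / 2) * Real.exp (-(β * (2 * x - 1) / 4)) := by
  have hu : Real.exp (β * x / 4) ≠ 0 := (Real.exp_pos _).ne'
  have hv : Real.exp (β * y / 4) ≠ 0 := (Real.exp_pos _).ne'
  have hw : Real.exp (β / 4) ≠ 0 := (Real.exp_pos _).ne'
  have e1 : Real.exp (β * (x - y) / 2)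
      = Real.exp (β * x / 4) * Real.exp (β * x / 4) /
        (Real.exp (β * y / 4) * Real.exp (β * y / 4)) := by
    rw [show β * (x - y) / 2 = β * x / 4 + β * x / 4 - (β * y / 4 + β * y / 4) from by ring,
      Real.exp_sub, Real.exp_add, Real.exp_add]
  have e2 : Real.exp (β * (x + y - 1) / 2)
      = Real.exp (β * x / 4) * Real.exp (β * x / 4) *
        (Real.exp (β * y / 4) * Real.exp (β * y / 4)) /
        (Real.exp (β / 4) * Real.exp (β / 4)) := by
    rw [show β * (x + y - 1) / 2
        = β * x / 4 + β * x / 4 + (β * y / 4 + β * y / 4) - (β / 4 + β / 4) from by ring,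
      Real.exp_sub, Real.exp_add, Real.exp_add, Real.exp_add, Real.exp_add]
  have e3 : Real.exp (β * (1 - y) / 2)
      = Real.exp (β / 4) * Real.exp (β / 4) /
        (Real.exp (β * y / 4) * Real.exp (β * y / 4)) := by
    rw [show β * (1 - y) / 2 = β / 4 + β / 4 - (β * y / 4 + β * y / 4) from by ring,
      Real.exp_sub, Real.exp_add, Real.exp_add]
  have e4 : Real.exp (β * y / 2) = Real.exp (β * y / 4) * Real.exp (β * y / 4) := by
    rw [← Real.exp_add]; ring_nf
  have e5 : Real.exp (β * (2 * x - 1) / 4)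
      = Real.exp (β * x / 4) * Real.exp (β * x / 4) / Real.exp (β / 4) := by
    rw [show β * (2 * x - 1) / 4 = β * x / 4 + β * x / 4 - β / 4 from by ring,
      Real.exp_sub, Real.exp_add]
  have e6 : Real.exp (-β / 4) = (Real.exp (β / 4))⁻¹ := by
    rw [show -β / 4 = -(β / 4) from by ring, Real.exp_neg]
  simp only [Real.cosh_eq, Real.sinh_eq, Real.exp_neg, e1, e2, e3, e4, e5, e6]
  field_simp
  ring

lemma key_ident (y β : ℝ) :
    Real.sinh (β * (1 - y) / 2) ^ 2
      + 2 * Real.sinh (β * (1 - y) / 2) * Real.sinh (β * y / 2) * Real.cosh (β / 2)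
      + Real.sinh (β * y / 2) ^ 2 = Real.sinh (β / 2) ^ 2 := by
  have h : β / 2 = β * (1 - y) / 2 + β * y / 2 := by ring
  rw [h, Real.sinh_add, Real.cosh_add]
  nlinarith [Real.cosh_sq (β * (1 - y) / 2), Real.cosh_sq (β * y / 2)]

lemma mallowsU_symm (x y β : ℝ) : mallowsU y x β = mallowsU x y β := by
  unfold mallowsU
  rw [show β * (y - x) / 2 = -(β * (x - y) / 2) from by ring, Real.cosh_neg,
    show y + x - 1 = x + y - 1 from by ring]

lemma mallowsU_neg (x y β : ℝ) : mallowsU x y β = mallowsU x (1 - y) (-β) := by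
  unfold mallowsU
  by_cases h : β = 0
  · simp [h]
  · rw [if_neg h, if_neg (neg_ne_zero.2 h)]
    rw [show -β / 2 = -(β / 2) from by ring, Real.sinh_neg,
      show -β * (x - (1 - y)) / 2 = -(β * (x + y - 1) / 2) from by ring, Real.cosh_neg,
      show -β * (x + (1 - y) - 1) / 2 = -(β * (x - y) / 2) from by ring, Real.cosh_neg,
      show -β / 4 = -(β / 4) from by ring, show - -β / 4 = β/4 from by ring]
    rw [show (Real.exp (-(β / 4)) * Real.cosh (β * (x + y - 1) / 2) -
        Real.exp (β / 4) * Real.cosh (β * (x - y) / 2))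
      = -(Real.exp (β / 4) * Real.cosh (β * (x - y) / 2) -
        Real.exp (-(β / 4)) * Real.cosh (β * (x + y - 1) / 2)) from by ring, neg_sq]
    ring

lemma endpoint_eval (P Q S E α γ : ℝ)
    (hd1 : P * E + Q * E⁻¹ ≠ 0) (hd0 : P * E⁻¹ + Q * E ≠ 0)
    (hs : S = (E * E - (E * E)⁻¹) / 2)
    (hαγ : α * P - γ * Q = 1 / 2)
    (hprod : (P * E + Q * E⁻¹) * (P * E⁻¹ + Q * E) = S ^ 2) :
    S * (-(α * E⁻¹ + γ * E) / (P * E + Q * E⁻¹))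
      - S * (-(α * E + γ * E⁻¹) / (P * E⁻¹ + Q * E)) = 1 := by
  have hb : (α * E + γ * E⁻¹) * (P * E + Q * E⁻¹)
      - (α * E⁻¹ + γ * E) * (P * E⁻¹ + Q * E) = S := by
    linear_combination (E * E - (E * E)⁻¹) * hαγ - hs
  rw [← mul_div_assoc, ← mul_div_assoc, div_sub_div _ _ hd1 hd0,
    div_eq_one_iff_eq (mul_ne_zero hd1 hd0)]
  linear_combination S * hb - hprod

set_option maxHeartbeats 2000000 in
lemma integral_col_pos (β : ℝ) (hβ : 0 < β) (y : ℝ) (hy0 : 0 ≤ y) (hy1 : y ≤ 1) :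
    (∫ x in (0:ℝ)..1, mallowsU x y β) = 1 := by
  set S := Real.sinh (β / 2) with hS_def
  set c := Real.cosh (β / 2) with hc_def
  set P := Real.sinh (β * (1 - y) / 2) with hP_def
  set Q := Real.sinh (β * y / 2) with hQ_def
  have hS : 0 < S := Real.sinh_pos_iff.2 (by linarith)
  have hP : 0 ≤ P := Real.sinh_nonneg_iff.2 (by nlinarith)
  have hQ : 0 ≤ Q := Real.sinh_nonneg_iff.2 (by positivity)
  have hkey : P ^ 2 + 2 * P * Q * c + Q ^ 2 = S ^ 2 := key_ident y β
  set α := (P + c * Q) / (2 * S ^ 2) with hα_def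
  set γ := -((Q + c * P) / (2 * S ^ 2)) with hγ_def
  have hαγ : α * P - γ * Q = 1 / 2 := by
    rw [hα_def, hγ_def]; field_simp; linear_combination hkey
  have hD : ∀ x : ℝ,
      0 < P * Real.exp (β * (2 * x - 1) / 4) + Q * Real.exp (-(β * (2 * x - 1) / 4)) := by
    intro x
    rcases lt_or_eq_of_le hy1 with h1 | h1
    · have hPpos : 0 < P := Real.sinh_pos_iff.2 (by nlinarith)
      have := mul_pos hPpos (Real.exp_pos (β * (2 * x - 1) / 4))
      nlinarith [mul_nonneg hQ (Real.exp_pos (-(β * (2 * x - 1) / 4))).le]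
    · have hQpos : 0 < Q := Real.sinh_pos_iff.2 (by rw [h1]; positivity)
      have := mul_pos hQpos (Real.exp_pos (-(β * (2 * x - 1) / 4)))
      nlinarith [mul_nonneg hP (Real.exp_pos (β * (2 * x - 1) / 4)).le]
  set F : ℝ → ℝ := fun x => S *
      (-(α * Real.exp (-(β * (2 * x - 1) / 4)) + γ * Real.exp (β * (2 * x - 1) / 4)) /
        (P * Real.exp (β * (2 * x - 1) / 4) + Q * Real.exp (-(β * (2 * x - 1) / 4)))) with hF_def
  have hderiv : ∀ x ∈ Set.uIcc (0:ℝ) 1, HasDerivAt F (mallowsU x y β) x := by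
    intro x _
    have ht : HasDerivAt (fun u : ℝ => β * (2 * u - 1) / 4) (β / 2) x := by
      have h := ((hasDerivAt_id x).const_mul (β / 2)).sub_const (β / 4)
      have heq : (fun u : ℝ => β / 2 * id u - β / 4) = fun u : ℝ => β * (2 * u - 1) / 4 := by
        funext u; simp; ring
      rw [heq] at h
      rw [mul_one] at h
      exact h
    have hE : HasDerivAt (fun u : ℝ => Real.exp (β * (2 * u - 1) / 4))
        (Real.exp (β * (2 * x - 1) / 4) * (β / 2)) x := ht.exp
    have hEn : HasDerivAt (fun u : ℝ => Real.exp (-(β * (2 * u - 1) / 4)))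
        (Real.exp (-(β * (2 * x - 1) / 4)) * -(β / 2)) x := ht.neg.exp
    have hN : HasDerivAt
        (fun u : ℝ => -(α * Real.exp (-(β * (2 * u - 1) / 4)) + γ * Real.exp (β * (2 * u - 1) / 4)))
        (-(α * (Real.exp (-(β * (2 * x - 1) / 4)) * -(β / 2))
          + γ * (Real.exp (β * (2 * x - 1) / 4) * (β / 2)))) x :=
      ((hEn.const_mul α).add (hE.const_mul γ)).neg
    have hDen : HasDerivAt
        (fun u : ℝ => P * Real.exp (β * (2 * u - 1) / 4) + Q * Real.exp (-(β * (2 * u - 1) / 4)))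
        (P * (Real.exp (β * (2 * x - 1) / 4) * (β / 2))
          + Q * (Real.exp (-(β * (2 * x - 1) / 4)) * -(β / 2))) x :=
      (hE.const_mul P).add (hEn.const_mul Q)
    have hDx := (hD x).ne'
    have hFD := (hN.div hDen hDx).const_mul S
    have hmul : Real.exp (β * (2 * x - 1) / 4) * Real.exp (-(β * (2 * x - 1) / 4)) = 1 := by
      rw [← Real.exp_add]; simp
    have hnum : -(α * (Real.exp (-(β * (2 * x - 1) / 4)) * -(β / 2))
          + γ * (Real.exp (β * (2 * x - 1) / 4) * (β / 2))) *
        (P * Real.exp (β * (2 * x - 1) / 4) + Q * Real.exp (-(β * (2 * x - 1) / 4))) -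
        -(α * Real.exp (-(β * (2 * x - 1) / 4)) + γ * Real.exp (β * (2 * x - 1) / 4)) *
        (P * (Real.exp (β * (2 * x - 1) / 4) * (β / 2))
          + Q * (Real.exp (-(β * (2 * x - 1) / 4)) * -(β / 2)))
        = β / 2 := by
      linear_combination (β * Real.exp (β * (2 * x - 1) / 4) *
        Real.exp (-(β * (2 * x - 1) / 4))) * hαγ + (β / 2) * hmul
    refine hFD.congr_deriv ?_
    symm
    rw [mallowsU, if_neg hβ.ne', denom_factor x y β, ← hP_def, ← hQ_def, ← hS_def, hnum]
    ring
  have hcont : ContinuousOn (fun x => mallowsU x y β) (Set.uIcc (0:ℝ) 1) := by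
    have heq : (fun x => mallowsU x y β) = fun x => (β / 2) * S /
        (P * Real.exp (β * (2 * x - 1) / 4) + Q * Real.exp (-(β * (2 * x - 1) / 4))) ^ 2 := by
      funext x; rw [mallowsU, if_neg hβ.ne', denom_factor x y β]
    rw [heq]
    apply ContinuousOn.div continuousOn_const
    · fun_prop
    · intro x _; exact pow_ne_zero 2 (hD x).ne'
  rw [intervalIntegral.integral_eq_sub_of_hasDerivAt hderiv hcont.intervalIntegrable]
  have e_half : Real.exp (β / 2) = Real.exp (β / 4) * Real.exp (β / 4) := by
    rw [← Real.exp_add]; ring_nf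
  have hEneg : Real.exp (-(β / 4)) = (Real.exp (β / 4))⁻¹ := Real.exp_neg _
  have hEne : Real.exp (β / 4) ≠ 0 := (Real.exp_pos _).ne'
  have hSE : S = (Real.exp (β / 4) * Real.exp (β / 4)
      - (Real.exp (β / 4) * Real.exp (β / 4))⁻¹) / 2 := by
    rw [hS_def, Real.sinh_eq, Real.exp_neg, e_half]
  have hcE : c = (Real.exp (β / 4) * Real.exp (β / 4)
      + (Real.exp (β / 4) * Real.exp (β / 4))⁻¹) / 2 := by
    rw [hc_def, Real.cosh_eq, Real.exp_neg, e_half]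
  have hF1 : F 1 = S * (-(α * Real.exp (-(β / 4)) + γ * Real.exp (β / 4)) /
      (P * Real.exp (β / 4) + Q * Real.exp (-(β / 4)))) := by
    simp only [hF_def]
    rw [show β * (2 * (1:ℝ) - 1) / 4 = β / 4 from by ring]
  have hF0 : F 0 = S * (-(α * Real.exp (β / 4) + γ * Real.exp (-(β / 4))) /
      (P * Real.exp (-(β / 4)) + Q * Real.exp (β / 4))) := by
    simp only [hF_def]
    rw [show β * (2 * (0:ℝ) - 1) / 4 = -(β / 4) from by ring, neg_neg]
  have hd1 : P * Real.exp (β / 4) + Q * (Real.exp (β / 4))⁻¹ ≠ 0 := by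
    have := hD 1
    rw [show β * (2 * (1:ℝ) - 1) / 4 = β / 4 from by ring, hEneg] at this
    exact this.ne'
  have hd0 : P * (Real.exp (β / 4))⁻¹ + Q * Real.exp (β / 4) ≠ 0 := by
    have := hD 0
    rw [show β * (2 * (0:ℝ) - 1) / 4 = -(β / 4) from by ring, neg_neg, hEneg] at this
    exact this.ne'
  have hEE : Real.exp (β / 4) * (Real.exp (β / 4))⁻¹ = 1 := mul_inv_cancel₀ hEne
  have hprod : (P * Real.exp (β / 4) + Q * (Real.exp (β / 4))⁻¹)
      * (P * (Real.exp (β / 4))⁻¹ + Q * Real.exp (β / 4)) = S ^ 2 := by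
    linear_combination (P ^ 2 + Q ^ 2) * hEE + hkey - (2 * P * Q) * hcE
  rw [hF1, hF0, hEneg]
  exact endpoint_eval P Q S (Real.exp (β / 4)) α γ hd1 hd0 hSE hαγ hprod

lemma integral_col (β : ℝ) (y : ℝ) (hy : y ∈ Set.Icc (0:ℝ) 1) :
    (∫ x in (0:ℝ)..1, mallowsU x y β) = 1 := by
  obtain ⟨hy0, hy1⟩ := hy
  rcases lt_trichotomy β 0 with h | h | h
  · have heq : (∫ x in (0:ℝ)..1, mallowsU x y β)
        = ∫ x in (0:ℝ)..1, mallowsU x (1 - y) (-β) := by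
      apply intervalIntegral.integral_congr
      intro t _
      exact mallowsU_neg t y β
    rw [heq]
    exact integral_col_pos (-β) (by linarith) (1 - y) (by linarith) (by linarith)
  · simp [mallowsU, h]
  · exact integral_col_pos β h y hy0 hy1

/-- **Lemma 3.5.** The density `u(·,·,β)` is doubly stochastic:
`∫₀¹ u(x,y,β) dx = 1` for all `y ∈ [0,1]` and `∫₀¹ u(x,y,β) dy = 1` for all `x ∈ [0,1]`. -/
theorem mallowsU_doubly_stochastic (β : ℝ) :
    (∀ y ∈ Set.Icc (0 : ℝ) 1, (∫ x in (0:ℝ)..1, mallowsU x y β) = 1) ∧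
    (∀ x ∈ Set.Icc (0 : ℝ) 1, (∫ y in (0:ℝ)..1, mallowsU x y β) = 1) := by
  constructor
  · intro y hy
    exact integral_col β y hy
  · intro x hx
    have heq : (∫ y in (0:ℝ)..1, mallowsU x y β)
        = ∫ y in (0:ℝ)..1, mallowsU y x β := by
      apply intervalIntegral.integral_congr
      intro t _
      exact mallowsU_symm t x β
    rw [heq]
    exact integral_col β x hx
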